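/- Let p, q, f, g : ℤ × ℤ → ℂ, and use the shift notation h_{ij}(n,m) = h(n+i, m+j). Suppose that for all (n,m) one has 1 + p q₁₁ ≠ 0 and the relations: p₀₁ = (q₁₀ p² + (g₁₀ − f) p + p₁₀)/(1 + p q₁₁), q₀₁ = (p₁₀ q₁₁² + (f − g₁₀) q₁₁ + q₁₀)/(1 + p q₁₁), f₀₁ = (q₁₁ (p₁₀ + p g₁₀) + f − p q₁₀)/(1 + p q₁₁), and g = (q₁₁ (p f − p₁₀) + g₁₀ + p q₁₀)/(1 + p q₁₁). Then for all (n,m): f₀₁ − p₀₁ q₁₁ = f − p q₁₀ and g₁₀ − p₁₀ q₁₁ = g − p q₀₁; consequently there exist functions α : ℤ → ℂ and β : ℤ → ℂ such that f(n,m) − p(n,m) q(n+1,m) = α(n) and g(n,m) − p(n,m) q(n,m+1) = β(m) for all (n,m). -/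

import Mathlib

/-- First integrals of the discrete system arising from NLS Darboux matrices:
`F = f − p q₁₀` is conserved in the `m`-direction and `G = g − p q₀₁` in the
`n`-direction; hence `F = α(n)` and `G = β(m)`. -/
theorem stmt_10 (p q f g : ℤ × ℤ → ℂ)
    (hne : ∀ n m : ℤ, 1 + p (n, m) * q (n + 1, m + 1) ≠ 0)
    (h1 : ∀ n m : ℤ, p (n, m + 1) =
      (q (n + 1, m) * (p (n, m)) ^ 2 + (g (n + 1, m) - f (n, m)) * p (n, m) + p (n + 1, m))
        / (1 + p (n, m) * q (n + 1, m + 1)))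
    (h2 : ∀ n m : ℤ, q (n, m + 1) =
      (p (n + 1, m) * (q (n + 1, m + 1)) ^ 2 + (f (n, m) - g (n + 1, m)) * q (n + 1, m + 1)
          + q (n + 1, m))
        / (1 + p (n, m) * q (n + 1, m + 1)))
    (h3 : ∀ n m : ℤ, f (n, m + 1) =
      (q (n + 1, m + 1) * (p (n + 1, m) + p (n, m) * g (n + 1, m)) + f (n, m)
          - p (n, m) * q (n + 1, m))
        / (1 + p (n, m) * q (n + 1, m + 1)))
    (h4 : ∀ n m : ℤ, g (n, m) =
      (q (n + 1, m + 1) * (p (n, m) * f (n, m) - p (n + 1, m)) + g (n + 1, m)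
          + p (n, m) * q (n + 1, m))
        / (1 + p (n, m) * q (n + 1, m + 1))) :
    (∀ n m : ℤ,
      f (n, m + 1) - p (n, m + 1) * q (n + 1, m + 1) = f (n, m) - p (n, m) * q (n + 1, m)) ∧
    (∀ n m : ℤ,
      g (n + 1, m) - p (n + 1, m) * q (n + 1, m + 1) = g (n, m) - p (n, m) * q (n, m + 1)) ∧
    ∃ (α β : ℤ → ℂ), ∀ n m : ℤ,
      f (n, m) - p (n, m) * q (n + 1, m) = α n ∧
      g (n, m) - p (n, m) * q (n, m + 1) = β m := by
  have hF : ∀ n m : ℤ,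
      f (n, m + 1) - p (n, m + 1) * q (n + 1, m + 1) = f (n, m) - p (n, m) * q (n + 1, m) := by
    intro n m
    rw [h3 n m, h1 n m, div_mul_eq_mul_div, div_sub_div_same, div_eq_iff (hne n m)]
    ring
  have hG : ∀ n m : ℤ,
      g (n + 1, m) - p (n + 1, m) * q (n + 1, m + 1) = g (n, m) - p (n, m) * q (n, m + 1) := by
    intro n m
    rw [h4 n m, h2 n m, mul_div_assoc', div_sub_div_same, eq_div_iff (hne n m)]
    ring
  refine ⟨hF, hG, fun n => f (n, 0) - p (n, 0) * q (n + 1, 0),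
    fun m => g (0, m) - p (0, m) * q (0, m + 1), fun n m => ⟨?_, ?_⟩⟩
  · induction m using Int.induction_on with
    | zero => rfl
    | succ k ih => rw [hF n k]; exact ih
    | pred k ih => rw [← ih, ← hF n (-k - 1)]; norm_num
  · induction n using Int.induction_on with
    | zero => rfl
    | succ k ih => rw [hG k m]; exact ih
    | pred k ih => rw [← ih, ← hG (-k - 1) m]; norm_num
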